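/- The subspace A' = ker φ ∩ ker π of S^2V ⊗ V has dimension (m³ − 4m)/3 where m = dim V = 2n, i.e. dim A' = (8/3)(n³ − n). -/

import Mathlib

/- Koszul differential A_{p,q} : SᵖV ⊗ Λ^{q-1}V → S^{p-1}V ⊗ ΛᵠV satisfies
   A_{p-1,q+1} ∘ A_{p,q} = 0.  We model the symmetric algebra of V = ℝᵐ as
   `MvPolynomial (Fin m) ℝ` (products of linear forms are the decomposable
   symmetric tensors) and the exterior algebra by `ExteriorAlgebra`.  The
   (total) Koszul map `A` is any linear map satisfying the defining formula on
   decomposable elements; these span everything, so `A` is the Koszul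
   differential and the claim is `A ∘ A = 0`. -/

open TensorProduct

set_option synthInstance.maxHeartbeats 1000000
set_option maxHeartbeats 1000000

noncomputable section

/-- A vector of `ℝᵐ` viewed as a degree-one element of the symmetric algebra. -/
def lin {m : ℕ} (v : Fin m → ℝ) : MvPolynomial (Fin m) ℝ :=
  ∑ i, MvPolynomial.C (v i) * MvPolynomial.X i

/-- The decomposable symmetric tensor `u 0 ⋯ u (p-1) ∈ SᵖV`. -/
def symProd {m p : ℕ} (u : Fin p → Fin m → ℝ) : MvPolynomial (Fin m) ℝ :=
  ∏ i, lin (u i)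

/-- The decomposable alternating tensor `v 0 ∧ ⋯ ∧ v (q-1) ∈ ΛᵠV`. -/
def wdg {m q : ℕ} (v : Fin q → Fin m → ℝ) : ExteriorAlgebra ℝ (Fin m → ℝ) :=
  (List.ofFn fun j => ExteriorAlgebra.ι ℝ (v j)).prod

/-- The model for `⊕_{p,q} SᵖV ⊗ ΛᵠV`. -/
abbrev MM (m : ℕ) :=
  MvPolynomial (Fin m) ℝ ⊗[ℝ] ExteriorAlgebra ℝ (Fin m → ℝ)

/-- The decomposable element `u 0 ⋯ u (p-1) ⊗ v 0 ∧ ⋯ ∧ v (q-1)` of `SᵖV ⊗ ΛᵠV`. -/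
def dec {m p q : ℕ} (u : Fin p → Fin m → ℝ) (v : Fin q → Fin m → ℝ) : MM m :=
  symProd u ⊗ₜ[ℝ] wdg v

/-- The subspace `SᵖV ⊗ ΛᵠV` of the model, spanned by the decomposable
elements. -/
def piece (m p q : ℕ) : Submodule ℝ (MM m) :=
  Submodule.span ℝ
    {x | ∃ u : Fin p → Fin m → ℝ, ∃ v : Fin q → Fin m → ℝ, x = dec u v}

open MvPolynomial

namespace Aux

variable {m : ℕ}

/-- standard basis vectors -/
def ee (i : Fin m) : Fin m → ℝ := Pi.single i 1

lemma lin_eq_sum_smul (v : Fin m → ℝ) : lin v = ∑ i, v i • (X i : MvPolynomial (Fin m) ℝ) := by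
  simp [lin, smul_eq_C_mul]

lemma lin_single (i : Fin m) : lin (ee i) = X i := by
  simp [lin_eq_sum_smul, ee, Pi.single_apply, Finset.sum_ite_eq']

lemma mul_lin_lin (a b : Fin m → ℝ) :
    lin a * lin b = ∑ i, ∑ j, (a i * b j) • ((X i : MvPolynomial (Fin m) ℝ) * X j) := by
  rw [lin_eq_sum_smul, lin_eq_sum_smul, Finset.sum_mul_sum]
  exact Finset.sum_congr rfl fun i _ => Finset.sum_congr rfl fun j _ =>
    smul_mul_smul_comm (a i) (X i) (b j) (X j)

lemma mul_lin_lin_lin (a b c : Fin m → ℝ) :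
    lin a * lin b * lin c =
      ∑ i, ∑ j, ∑ k, (a i * b j * c k) •
        ((X i : MvPolynomial (Fin m) ℝ) * X j * X k) := by
  rw [mul_lin_lin, lin_eq_sum_smul, Finset.sum_mul]
  refine Finset.sum_congr rfl fun i _ => ?_
  rw [Finset.sum_mul]
  refine Finset.sum_congr rfl fun j _ => ?_
  rw [Finset.mul_sum]
  refine Finset.sum_congr rfl fun k _ => ?_
  rw [smul_mul_smul_comm]

lemma vec_eq_sum (v : Fin m → ℝ) : v = ∑ k, v k • ee k := by
  ext j
  simp [ee, Pi.single_apply, Finset.sum_apply, mul_comm]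

/-- monomial attached to a `Sym` -/
def symMon {k : ℕ} (s : Sym (Fin m) k) : MvPolynomial (Fin m) ℝ :=
  (s.val.map X).prod

lemma multiset_prod_X (t : Multiset (Fin m)) :
    (t.map X).prod = monomial (Multiset.toFinsupp t) (1 : ℝ) := by
  induction t using Multiset.induction with
  | empty => simp
  | cons a t ih =>
      rw [Multiset.map_cons, Multiset.prod_cons, ih, X, monomial_mul, one_mul]
      congr 1
      rw [← Multiset.singleton_add, Multiset.toFinsupp_add, Multiset.toFinsupp_singleton]

lemma symMon_eq (s : Sym (Fin m) k) :
    symMon s = monomial (Multiset.toFinsupp s.val) (1 : ℝ) := multiset_prod_X _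

lemma symMon_indep (k : ℕ) : LinearIndependent ℝ (symMon (m := m) (k := k)) := by
  have h : symMon (m := m) (k := k) =
      (fun d => monomial d (1 : ℝ)) ∘ fun s : Sym (Fin m) k => Multiset.toFinsupp s.val := by
    funext s; exact symMon_eq s
  rw [h, ← coe_basisMonomials]
  exact (basisMonomials (Fin m) ℝ).linearIndependent.comp _
    (fun s t hst => Sym.coe_injective (Multiset.toFinsupp.injective hst))

lemma symMon_pair (i j : Fin m) :
    symMon (⟨{i, j}, rfl⟩ : Sym (Fin m) 2) = X i * X j := by
  simp [symMon]

lemma symMon_triple (i j k : Fin m) :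
    symMon (⟨{i, j, k}, rfl⟩ : Sym (Fin m) 3) = X i * X j * X k := by
  simp [symMon, mul_assoc]

lemma symProd_two (a b : Fin m → ℝ) : symProd ![a, b] = lin a * lin b := by
  simp [symProd, Fin.prod_univ_two]

lemma wdg_one (c : Fin m → ℝ) : wdg ![c] = ExteriorAlgebra.ι ℝ c := by
  simp [wdg, List.ofFn_succ]

lemma dec_two_one (a b c : Fin m → ℝ) :
    dec ![a, b] ![c] = (lin a * lin b) ⊗ₜ[ℝ] ExteriorAlgebra.ι ℝ c := by
  rw [dec, symProd_two, wdg_one]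

/-- generic decomposable of `S²V ⊗ V` written in the `dec` form -/
lemma mem_piece_two_one (a b c : Fin m → ℝ) :
    (lin a * lin b) ⊗ₜ[ℝ] ExteriorAlgebra.ι ℝ c ∈ piece m 2 1 := by
  rw [← dec_two_one]
  exact Submodule.subset_span ⟨![a, b], ![c], rfl⟩

/-- the spanning family of `S²V ⊗ V` -/
def TT (p : Sym (Fin m) 2 × Fin m) : MM m :=
  symMon p.1 ⊗ₜ[ℝ] ExteriorAlgebra.ι ℝ (ee p.2)

lemma iota_expand (c : Fin m → ℝ) :
    ExteriorAlgebra.ι ℝ c = ∑ k, c k • ExteriorAlgebra.ι ℝ (ee (m := m) k) := by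
  conv_lhs => rw [vec_eq_sum c]
  simp

lemma tmul_expand (a b c : Fin m → ℝ) :
    (lin a * lin b) ⊗ₜ[ℝ] ExteriorAlgebra.ι ℝ c =
      ∑ i, ∑ j, ∑ k, (a i * b j * c k) •
        (((X i : MvPolynomial (Fin m) ℝ) * X j) ⊗ₜ[ℝ] ExteriorAlgebra.ι ℝ (ee k)) := by
  rw [mul_lin_lin, iota_expand, TensorProduct.sum_tmul]
  refine Finset.sum_congr rfl fun i _ => ?_
  rw [TensorProduct.sum_tmul]
  refine Finset.sum_congr rfl fun j _ => ?_
  rw [TensorProduct.tmul_sum]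
  refine Finset.sum_congr rfl fun k _ => ?_
  simp [TensorProduct.smul_tmul', smul_smul, mul_comm, mul_left_comm, mul_assoc]

lemma piece_eq : piece m 2 1 = Submodule.span ℝ (Set.range (TT (m := m))) := by
  apply le_antisymm
  · rw [piece, Submodule.span_le]
    rintro x ⟨u, v, rfl⟩
    have hv : wdg v = ExteriorAlgebra.ι ℝ (v 0) := by
      have hv' : v = ![v 0] := by
        funext j; fin_cases j <;> rfl
      conv_lhs => rw [hv']
      rw [wdg_one]
    have hu : symProd u = lin (u 0) * lin (u 1) := by
      simp [symProd, Fin.prod_univ_two]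
    rw [dec, hv, hu, tmul_expand]
    refine Submodule.sum_mem _ fun i _ => Submodule.sum_mem _ fun j _ =>
      Submodule.sum_mem _ fun k _ => Submodule.smul_mem _ _ ?_
    rw [← symMon_pair i j]
    exact Submodule.subset_span ⟨(⟨{i, j}, rfl⟩, k), rfl⟩
  · rw [Submodule.span_le]
    rintro x ⟨⟨s, k⟩, rfl⟩
    obtain ⟨i, j, hij⟩ := Multiset.card_eq_two.mp s.2
    have : TT (s, k) = (lin (ee i) * lin (ee j)) ⊗ₜ[ℝ] ExteriorAlgebra.ι ℝ (ee k) := by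
      rw [TT, lin_single, lin_single]
      congr 1
      have : s = (⟨{i, j}, rfl⟩ : Sym (Fin m) 2) := Sym.coe_injective hij
      rw [this, symMon_pair]
    rw [this]
    exact mem_piece_two_one _ _ _

lemma TT_indep : LinearIndependent ℝ (TT (m := m)) := by
  set G := LinearMap.lTensor (MvPolynomial (Fin m) ℝ)
    (ExteriorAlgebra.ιInv : ExteriorAlgebra ℝ (Fin m → ℝ) →ₗ[ℝ] (Fin m → ℝ))
  apply LinearIndependent.of_comp G
  have h : G ∘ TT (m := m) =
      (Module.Basis.tensorProduct (basisMonomials (Fin m) ℝ) (Pi.basisFun ℝ (Fin m))) ∘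
        fun p : Sym (Fin m) 2 × Fin m => (Multiset.toFinsupp p.1.val, p.2) := by
    funext p
    simp only [G, Function.comp_apply, TT, LinearMap.lTensor_tmul,
      Module.Basis.tensorProduct_apply, coe_basisMonomials, Pi.basisFun_apply, symMon_eq]
    rw [ExteriorAlgebra.ι_leftInverse (ee p.2)]
    rfl
  rw [h]
  exact (Module.Basis.tensorProduct (basisMonomials (Fin m) ℝ)
    (Pi.basisFun ℝ (Fin m))).linearIndependent.comp _
    (fun p q hpq => by
      obtain ⟨h1, h2⟩ := Prod.mk.injEq .. ▸ hpq
      exact Prod.ext (Sym.coe_injective (Multiset.toFinsupp.injective h1)) h2)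

lemma finrank_piece : Module.finrank ℝ ↥(piece m 2 1) =
    Fintype.card (Sym (Fin m) 2) * m := by
  rw [piece_eq, finrank_span_eq_card TT_indep, Fintype.card_prod, Fintype.card_fin]

lemma finrank_S3 :
    Module.finrank ℝ ↥(Submodule.span ℝ (Set.range (symMon (m := m) (k := 3)))) =
      Fintype.card (Sym (Fin m) 3) :=
  finrank_span_eq_card (symMon_indep 3)

lemma map_pi_piece (π : MM m →ₗ[ℝ] MvPolynomial (Fin m) ℝ)
    (hπ : ∀ u₁ u₂ v : Fin m → ℝ,
      π ((lin u₁ * lin u₂) ⊗ₜ[ℝ] ExteriorAlgebra.ι ℝ v) =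
        (1 / 3 : ℝ) • (lin u₁ * lin u₂ * lin v)) :
    Submodule.map π (piece m 2 1) =
      Submodule.span ℝ (Set.range (symMon (m := m) (k := 3))) := by
  rw [piece, Submodule.map_span]
  apply le_antisymm
  · rw [Submodule.span_le]
    rintro x ⟨y, ⟨u, v, rfl⟩, rfl⟩
    have hv' : v = ![v 0] := by funext j; fin_cases j; rfl
    have hd : dec u v = (lin (u 0) * lin (u 1)) ⊗ₜ[ℝ] ExteriorAlgebra.ι ℝ (v 0) := by
      conv_lhs => rw [hv']
      rw [← dec_two_one]
      congr 1
      funext j; fin_cases j <;> rfl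
    rw [hd, hπ, mul_lin_lin_lin, Finset.smul_sum]
    refine Submodule.sum_mem _ fun i _ => ?_
    rw [Finset.smul_sum]
    refine Submodule.sum_mem _ fun j _ => ?_
    rw [Finset.smul_sum]
    refine Submodule.sum_mem _ fun k _ => ?_
    rw [smul_smul, ← symMon_triple i j k]
    exact Submodule.smul_mem _ _ (Submodule.subset_span ⟨_, rfl⟩)
  · rw [Submodule.span_le]
    rintro x ⟨t, rfl⟩
    obtain ⟨i, j, k, hijk⟩ := Multiset.card_eq_three.mp t.2
    have ht : t = (⟨{i, j, k}, rfl⟩ : Sym (Fin m) 3) := Sym.coe_injective hijk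
    have hx : symMon t = (3 : ℝ) •
        π ((lin (ee i) * lin (ee j)) ⊗ₜ[ℝ] ExteriorAlgebra.ι ℝ (ee k)) := by
      rw [hπ, smul_smul, lin_single, lin_single, lin_single, ht, symMon_triple]
      norm_num
    rw [hx]
    refine Submodule.smul_mem _ _ (Submodule.subset_span ?_)
    exact ⟨(lin (ee i) * lin (ee j)) ⊗ₜ[ℝ] ExteriorAlgebra.ι ℝ (ee k),
      ⟨![ee i, ee j], ![ee k], (dec_two_one _ _ _).symm⟩, rfl⟩

lemma rank_nullity_sub {N : Type*} [AddCommGroup N] [Module ℝ N]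
    (W : Submodule ℝ (MM m)) [FiniteDimensional ℝ ↥W] (f : MM m →ₗ[ℝ] N) :
    Module.finrank ℝ ↥W =
      Module.finrank ℝ ↥(Submodule.map f W) +
        Module.finrank ℝ ↥(W ⊓ LinearMap.ker f) := by
  have h := LinearMap.finrank_range_add_finrank_ker (K := ℝ) (V := ↥W) (V₂ := N) (f.domRestrict W)
  rw [LinearMap.range_domRestrict, LinearMap.ker_domRestrict] at h
  have h2 := Submodule.finrank_map_subtype_eq W (Submodule.comap W.subtype (LinearMap.ker f))
  rw [Submodule.map_comap_subtype] at h2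
  rw [← h2] at h
  exact h.symm

lemma dec_mem_piece {p q : ℕ} (u : Fin p → Fin m → ℝ) (v : Fin q → Fin m → ℝ) :
    dec u v ∈ piece m p q :=
  Submodule.subset_span ⟨u, v, rfl⟩

end Aux


open Aux in
/-- The irreducible summand `𝒜' = ker φ ∩ ker π ⊆ S²V ⊗ V` has dimension
`(m³ − 4m)/3 = (8/3)(n³ − n)`, where `m = dim V = 2n`. -/
theorem stmt8 (n : ℕ)
    (ω : (Fin (2 * n) → ℝ) →ₗ[ℝ] (Fin (2 * n) → ℝ) →ₗ[ℝ] ℝ)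
    (halt : ∀ x, ω x x = 0)
    (hnd : ∀ x, (∀ y, ω x y = 0) → x = 0)
    (π : MM (2 * n) →ₗ[ℝ] MvPolynomial (Fin (2 * n)) ℝ)
    (hπ : ∀ u₁ u₂ v : Fin (2 * n) → ℝ,
      π ((lin u₁ * lin u₂) ⊗ₜ[ℝ] ExteriorAlgebra.ι ℝ v) =
        (1 / 3 : ℝ) • (lin u₁ * lin u₂ * lin v))
    (φ : MM (2 * n) →ₗ[ℝ] (Fin (2 * n) → ℝ))
    (hφ : ∀ u₁ u₂ v : Fin (2 * n) → ℝ,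
      φ ((lin u₁ * lin u₂) ⊗ₜ[ℝ] ExteriorAlgebra.ι ℝ v) =
        ω u₁ v • u₂ + ω u₂ v • u₁) :
    3 * Module.finrank ℝ
        ↥(piece (2 * n) 2 1 ⊓ LinearMap.ker φ ⊓ LinearMap.ker π) =
      8 * (n ^ 3 - n) := by
  classical
  have hanti : ∀ x y, ω y x = -ω x y := by
    intro x y
    have h := halt (x + y)
    simp only [map_add, LinearMap.add_apply, halt] at h
    linarith
  haveI hFD : FiniteDimensional ℝ ↥(piece (2 * n) 2 1) := by
    rw [piece_eq]
    exact FiniteDimensional.span_of_finite ℝ (Set.finite_range _)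
  haveI : FiniteDimensional ℝ ↥(piece (2 * n) 2 1 ⊓ LinearMap.ker π) :=
    Submodule.finiteDimensional_of_le inf_le_left
  -- rank-nullity applications
  have h1 := rank_nullity_sub (piece (2 * n) 2 1) π
  have h2 := rank_nullity_sub (piece (2 * n) 2 1 ⊓ LinearMap.ker π) φ
  -- the special elements
  have hπx : ∀ a b c : Fin (2 * n) → ℝ,
      π (dec ![a, b] ![c] - dec ![a, c] ![b]) = 0 := by
    intro a b c
    rw [map_sub, dec_two_one, dec_two_one, hπ, hπ,
      show lin a * lin c * lin b = lin a * lin b * lin c from by ring]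
    exact sub_self _
  have hφx : ∀ a b c : Fin (2 * n) → ℝ,
      φ (dec ![a, b] ![c] - dec ![a, c] ![b]) =
        ω a c • b + (2 * ω b c) • a - ω a b • c := by
    intro a b c
    rw [map_sub, dec_two_one, dec_two_one, hφ, hφ, hanti b c]
    module
  have hmemW1 : ∀ a b c : Fin (2 * n) → ℝ,
      dec ![a, b] ![c] - dec ![a, c] ![b] ∈
        piece (2 * n) 2 1 ⊓ LinearMap.ker π := by
    intro a b c
    refine Submodule.mem_inf.mpr ⟨sub_mem (dec_mem_piece _ _) (dec_mem_piece _ _), ?_⟩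
    rw [LinearMap.mem_ker]
    exact hπx a b c
  -- surjectivity of φ on piece ⊓ ker π
  have hsurj : Submodule.map φ (piece (2 * n) 2 1 ⊓ LinearMap.ker π) = ⊤ := by
    rw [eq_top_iff]
    intro w _
    by_cases hn : n = 0
    · subst hn
      have hw : w = 0 := funext fun i => i.elim0
      rw [hw]; exact zero_mem _
    · set b : Fin (2 * n) → ℝ := ee ⟨0, by omega⟩ with hbdef
      have hb0 : b ≠ 0 := by
        intro h
        have h0 := congrFun h ⟨0, by omega⟩
        simp [hbdef, ee, Pi.single_apply] at h0
      obtain ⟨c', hc'⟩ : ∃ y, ω b y ≠ 0 := by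
        by_contra h
        push_neg at h
        exact hb0 (hnd b h)
      set c : Fin (2 * n) → ℝ := (2 * ω b c')⁻¹ • c' with hcdef
      have hbc : ω b c = 1 / 2 := by
        rw [hcdef, map_smul, smul_eq_mul]
        field_simp
      have hI : ∀ a, ω a c • b + (2 * ω b c) • a - ω a b • c ∈
          Submodule.map φ (piece (2 * n) 2 1 ⊓ LinearMap.ker π) :=
        fun a => ⟨_, hmemW1 a b c, hφx a b c⟩
      have hbI : b ∈ Submodule.map φ (piece (2 * n) 2 1 ⊓ LinearMap.ker π) := by
        have h := hI b
        rw [halt, hbc] at h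
        have hb' : b = ((3 : ℝ) / 2)⁻¹ •
            ((1 / 2 : ℝ) • b + (2 * (1 / 2) : ℝ) • b - (0 : ℝ) • c) := by
          match_scalars <;> norm_num
        rw [hb']
        exact Submodule.smul_mem _ _ h
      have hcI : c ∈ Submodule.map φ (piece (2 * n) 2 1 ⊓ LinearMap.ker π) := by
        have h := hI c
        rw [halt, hanti b c, hbc] at h
        have hc2 : c = ((3 : ℝ) / 2)⁻¹ •
            ((0 : ℝ) • b + (2 * (1 / 2) : ℝ) • c - (-(1 / 2) : ℝ) • c) := by
          match_scalars <;> ring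
        rw [hc2]
        exact Submodule.smul_mem _ _ h
      have h := hI w
      rw [hbc] at h
      have hw : w = (ω w c • b + (2 * (1 / 2) : ℝ) • w - ω w b • c)
          - ω w c • b + ω w b • c := by
        match_scalars <;> ring
      rw [hw]
      exact add_mem (sub_mem h (Submodule.smul_mem _ _ hbI)) (Submodule.smul_mem _ _ hcI)
  -- assemble the numbers
  rw [finrank_piece, map_pi_piece π hπ, finrank_S3] at h1
  rw [hsurj, finrank_top, Module.finrank_fin_fun] at h2
  rw [inf_right_comm]
  set x := Module.finrank ℝ
    ↥(piece (2 * n) 2 1 ⊓ LinearMap.ker π ⊓ LinearMap.ker φ) with hx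
  have hcard2 : Fintype.card (Sym (Fin (2 * n)) 2) = (2 * n + 1).choose 2 := by
    rw [Sym.card_sym_eq_choose, Fintype.card_fin]
    congr 1
  have hcard3 : Fintype.card (Sym (Fin (2 * n)) 3) = (2 * n + 2).choose 3 := by
    rw [Sym.card_sym_eq_choose, Fintype.card_fin]
    congr 1
  rw [hcard2, hcard3] at h1
  have ha : (2 * n) * (2 * n + 1) = 2 * ((2 * n + 1).choose 2) := by
    have h := Nat.descFactorial_eq_factorial_mul_choose (2 * n + 1) 2
    simp [Nat.descFactorial, Nat.factorial] at h
    ring_nf at h ⊢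
    linarith
  have hb : (2 * n) * (2 * n + 1) * (2 * n + 2) = 6 * ((2 * n + 2).choose 3) := by
    have h := Nat.descFactorial_eq_factorial_mul_choose (2 * n + 2) 3
    simp [Nat.descFactorial, Nat.factorial] at h
    ring_nf at h ⊢
    linarith
  have e : 3 * ((2 * n) * (2 * n + 1)) * (2 * n) =
      (2 * n) * (2 * n + 1) * (2 * n + 2) + 6 * (2 * n) + 6 * x := by
    calc 3 * ((2 * n) * (2 * n + 1)) * (2 * n)
        = 6 * ((2 * n + 1).choose 2 * (2 * n)) := by rw [ha]; ring
      _ = 6 * ((2 * n + 2).choose 3 + (2 * n + x)) := by rw [h1, h2]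
      _ = (2 * n) * (2 * n + 1) * (2 * n + 2) + 6 * (2 * n) + 6 * x := by rw [hb]; ring
  have hc : n ≤ n ^ 3 := Nat.le_self_pow (by norm_num) n
  have key : 6 * x + 16 * n = 16 * n ^ 3 := by
    ring_nf at e ⊢
    linarith
  obtain ⟨t, ht⟩ : ∃ t, n ^ 3 = t := ⟨_, rfl⟩
  rw [ht] at key hc ⊢
  omega

end
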